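/- Fix an integer n ≥ 1. Let ψ : ℝ → ℝ be (n−1)-times continuously differentiable such that for every θ ∈ ℤ the restriction of ψ to [θ/2, (θ+1)/2] coincides with a polynomial of degree at most n, with leading coefficient (the coefficient of x^n) denoted A_θ. Let η : ℝ → ℝ be integrable, vanishing outside (−2^{−5}, 2^{−5}), with ∫_ℝ y^M η(y) dy = 0 for every integer 0 ≤ M ≤ n+2, and such that y ↦ y^n η(y) is an odd function. Let k, N ∈ ℕ, let K_0 ≥ 1 be an integer, let μ, μ' ∈ ℤ, and set λ = 2 K_0 (μ' − μ). Then 2^k ∫_ℝ η(2^{k+N}(x − 2^{−k} K_0 μ' − 2^{−k−1})) ψ(2^k x − K_0 μ) dx = 2^{−(n+1)N} (A_{λ+1} − A_λ) ∫_0^{1/2} y^n η(y) dy. -/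

import Mathlib

open MeasureTheory Set Finset Real Filter

private lemma iteratedDeriv_polyeval (p : Polynomial ℝ) (j : ℕ) :
    iteratedDeriv j (fun x => p.eval x) = fun x => (Polynomial.derivative^[j] p).eval x := by
  induction j with
  | zero => simp
  | succ j ih =>
    rw [iteratedDeriv_succ, ih]
    funext x
    rw [Function.iterate_succ_apply']
    exact Polynomial.deriv (p := Polynomial.derivative^[j] p)

private lemma iteratedDeriv_eq_on_closure {m j : ℕ} {f : ℝ → ℝ} (hf : ContDiff ℝ (m : ℕ) f)
    (hj : j ≤ m) (p : Polynomial ℝ) {s : Set ℝ} (hs : IsOpen s)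
    (heq : ∀ x ∈ s, f x = p.eval x) {a : ℝ} (ha : a ∈ closure s) :
    iteratedDeriv j f a = (Polynomial.derivative^[j] p).eval a := by
  have hne : (nhdsWithin a s).NeBot := mem_closure_iff_nhdsWithin_neBot.mp ha
  have h1 : ∀ x ∈ s, iteratedDeriv j f x = (Polynomial.derivative^[j] p).eval x := by
    intro x hx
    have hev : f =ᶠ[nhds x] fun y => p.eval y := by
      filter_upwards [hs.mem_nhds hx] with y hy using heq y hy
    rw [hev.iteratedDeriv_eq j, iteratedDeriv_polyeval]
  have hc1 : Continuous (iteratedDeriv j f) :=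
    hf.continuous_iteratedDeriv j (by exact_mod_cast hj)
  have hc2 : Continuous fun x => (Polynomial.derivative^[j] p).eval x :=
    (Polynomial.derivative^[j] p).continuous
  have t1 : Tendsto (fun x => (Polynomial.derivative^[j] p).eval x) (nhdsWithin a s)
      (nhds (iteratedDeriv j f a)) :=
    Tendsto.congr' (eventually_nhdsWithin_of_forall h1)
      (hc1.continuousAt.continuousWithinAt.tendsto)
  have t2 : Tendsto (fun x => (Polynomial.derivative^[j] p).eval x) (nhdsWithin a s)
      (nhds ((Polynomial.derivative^[j] p).eval a)) :=
    (hc2.tendsto a).mono_left nhdsWithin_le_nhds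
  exact tendsto_nhds_unique t1 t2

private lemma poly_gap {n : ℕ} (D : Polynomial ℝ) (hD : D.natDegree ≤ n) (a : ℝ)
    (h : ∀ j < n, (Polynomial.derivative^[j] D).eval a = 0) (x : ℝ) :
    D.eval x = D.coeff n * (x - a) ^ n := by
  have key : ∀ i, (Polynomial.taylor a D).coeff i = if i = n then D.coeff n else 0 := by
    intro i
    rcases lt_trichotomy i n with h1 | rfl | h1
    · rw [Polynomial.taylor_coeff, if_neg h1.ne]
      have h2 : Polynomial.eval a (Polynomial.derivative^[i] D)
          = (Nat.factorial i : ℝ) * Polynomial.eval a (Polynomial.hasseDeriv i D) := by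
        rw [← Polynomial.factorial_smul_hasseDeriv]
        simp [nsmul_eq_mul]
      rw [h i h1] at h2
      have hfac : ((Nat.factorial i : ℕ) : ℝ) ≠ 0 := by
        exact_mod_cast Nat.factorial_ne_zero i
      exact (mul_eq_zero.mp h2.symm).resolve_left hfac
    · rw [if_pos rfl, Polynomial.taylor_coeff]
      have hC : Polynomial.hasseDeriv i D = Polynomial.C (D.coeff i) := by
        ext m
        rw [Polynomial.hasseDeriv_coeff]
        match m with
        | 0 => simp
        | (m+1) =>
          rw [Polynomial.coeff_C, if_neg (Nat.succ_ne_zero m)]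
          have hlt : D.natDegree < m + 1 + i := by omega
          rw [Polynomial.coeff_eq_zero_of_natDegree_lt hlt, mul_zero]
      rw [hC, Polynomial.eval_C]
    · rw [if_neg h1.ne']
      apply Polynomial.coeff_eq_zero_of_natDegree_lt
      rw [Polynomial.natDegree_taylor]
      exact lt_of_le_of_lt hD h1
  have hx : D.eval x = (Polynomial.taylor a D).eval (x - a) :=
    (Polynomial.taylor_eval_sub a D x).symm
  rw [hx, Polynomial.eval_eq_sum_range' (lt_of_le_of_lt
    (by rw [Polynomial.natDegree_taylor]; exact hD) (Nat.lt_succ_self n))]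
  rw [Finset.sum_eq_single n]
  · rw [key, if_pos rfl]
  · intro b hb hbn
    rw [key, if_neg hbn, zero_mul]
  · intro hn
    exact absurd (Finset.self_mem_range_succ n) hn
theorem stmt_7
    (n : ℕ) (hn : 1 ≤ n) (ψ : ℝ → ℝ)
    (hsmooth : ContDiff ℝ (n - 1 : ℕ) ψ)
    (A : ℤ → ℝ)
    (hpoly : ∀ θ : ℤ, ∃ c : ℕ → ℝ, c n = A θ ∧
      ∀ x ∈ Set.Icc ((θ : ℝ) / 2) (((θ : ℝ) + 1) / 2),
        ψ x = ∑ j ∈ Finset.range (n + 1), c j * x ^ j)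
    (η : ℝ → ℝ) (hη : MeasureTheory.Integrable η)
    (hηsupp : ∀ y : ℝ, y ∉ Set.Ioo (-(2 : ℝ) ^ (-5 : ℤ)) ((2 : ℝ) ^ (-5 : ℤ)) → η y = 0)
    (hηmom : ∀ M : ℕ, M ≤ n + 2 → ∫ y : ℝ, y ^ M * η y = 0)
    (hηodd : ∀ y : ℝ, (-y) ^ n * η (-y) = -(y ^ n * η y))
    (k N : ℕ) (K₀ : ℤ) (hK₀ : 1 ≤ K₀) (μ μ' : ℤ) :
    (2 : ℝ) ^ k * ∫ x : ℝ,
        η ((2 : ℝ) ^ (k + N) * (x - (2 : ℝ) ^ (-(k : ℤ)) * (K₀ : ℝ) * (μ' : ℝ) -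
            (2 : ℝ) ^ (-(k : ℤ) - 1))) *
          ψ ((2 : ℝ) ^ k * x - (K₀ : ℝ) * (μ : ℝ)) =
      (2 : ℝ) ^ (-(((n : ℤ) + 1) * (N : ℤ))) *
        (A (2 * K₀ * (μ' - μ) + 1) - A (2 * K₀ * (μ' - μ))) *
        ∫ y in (0 : ℝ)..(1 / 2), y ^ n * η y := by
  obtain ⟨c, hcn, hc⟩ := hpoly (2 * K₀ * (μ' - μ))
  obtain ⟨c', hcn', hc'⟩ := hpoly (2 * K₀ * (μ' - μ) + 1)
  set lam : ℤ := 2 * K₀ * (μ' - μ) with hlamdef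
  set a : ℝ := ((lam : ℝ) + 1) / 2 with hadef
  set β : ℝ := ((2 : ℝ) ^ N)⁻¹ with hβdef
  have hβpos : 0 < β := by positivity
  have hβle : β ≤ 1 := by
    rw [hβdef]
    apply inv_le_one_of_one_le₀
    exact one_le_pow₀ (by norm_num)
  have h5 : ((2 : ℝ)) ^ (-5 : ℤ) = 1 / 32 := by norm_num
  -- the polynomials
  set p : Polynomial ℝ := ∑ j ∈ Finset.range (n + 1), Polynomial.C (c j) * Polynomial.X ^ j
    with hpdef
  set q : Polynomial ℝ := ∑ j ∈ Finset.range (n + 1), Polynomial.C (c' j) * Polynomial.X ^ j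
    with hqdef
  have hpeval : ∀ x : ℝ, p.eval x = ∑ j ∈ Finset.range (n + 1), c j * x ^ j := by
    intro x; rw [hpdef]; simp [Polynomial.eval_finset_sum]
  have hqeval : ∀ x : ℝ, q.eval x = ∑ j ∈ Finset.range (n + 1), c' j * x ^ j := by
    intro x; rw [hqdef]; simp [Polynomial.eval_finset_sum]
  have hcoeff : ∀ d : ℕ → ℝ, (∑ j ∈ Finset.range (n + 1),
      Polynomial.C (d j) * Polynomial.X ^ j).coeff n = d n := by
    intro d
    rw [Polynomial.finset_sum_coeff]
    rw [Finset.sum_eq_single n]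
    · simp
    · intro b _ hbn
      simp [Polynomial.coeff_C_mul, Polynomial.coeff_X_pow, Ne.symm hbn]
    · intro hnn
      exact absurd (Finset.self_mem_range_succ n) hnn
  have hpcoeff : p.coeff n = A lam := by rw [hpdef, hcoeff, hcn]
  have hqcoeff : q.coeff n = A (lam + 1) := by rw [hqdef, hcoeff, hcn']
  have hdegaux : ∀ d : ℕ → ℝ, (∑ j ∈ Finset.range (n + 1),
      Polynomial.C (d j) * Polynomial.X ^ j).natDegree ≤ n := by
    intro d
    apply Polynomial.natDegree_sum_le_of_forall_le
    intro j hj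
    refine le_trans (Polynomial.natDegree_C_mul_le _ _) ?_
    rw [Polynomial.natDegree_X_pow]
    exact Nat.lt_succ_iff.mp (Finset.mem_range.mp hj)
  have hpdeg : p.natDegree ≤ n := by rw [hpdef]; exact hdegaux c
  have hqdeg : q.natDegree ≤ n := by rw [hqdef]; exact hdegaux c'
  -- ψ agrees with the polynomials
  have hcR : ∀ x ∈ Set.Icc ((lam : ℝ) / 2) a, ψ x = p.eval x := by
    intro x hx
    rw [hpeval]
    exact hc x hx
  have hq'R : ∀ x ∈ Set.Icc a (a + 1 / 2), ψ x = q.eval x := by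
    intro x hx
    rw [hqeval]
    apply hc'
    rw [Set.mem_Icc] at hx ⊢
    rw [hadef] at hx
    push_cast
    constructor
    · linarith [hx.1]
    · linarith [hx.2]
  -- derivative matching at a
  have hba : (lam : ℝ) / 2 < a := by rw [hadef]; linarith
  have haa : a < a + 1 / 2 := by linarith
  have hmatch : ∀ j < n, (Polynomial.derivative^[j] (q - p)).eval a = 0 := by
    intro j hj
    have hj' : j ≤ n - 1 := by omega
    have e1 : iteratedDeriv j ψ a = (Polynomial.derivative^[j] p).eval a := by
      apply iteratedDeriv_eq_on_closure hsmooth hj' p isOpen_Ioo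
      · intro x hx; exact hcR x (Set.mem_Icc_of_Ioo hx)
      · rw [closure_Ioo hba.ne]; exact Set.right_mem_Icc.mpr hba.le
    have e2 : iteratedDeriv j ψ a = (Polynomial.derivative^[j] q).eval a := by
      apply iteratedDeriv_eq_on_closure hsmooth hj' q isOpen_Ioo
      · intro x hx; exact hq'R x (Set.mem_Icc_of_Ioo hx)
      · rw [closure_Ioo haa.ne]; exact Set.left_mem_Icc.mpr haa.le
    rw [Polynomial.iterate_derivative_sub, Polynomial.eval_sub, ← e1, ← e2, sub_self]
  have hgap : ∀ x : ℝ, q.eval x - p.eval x = (A (lam + 1) - A lam) * (x - a) ^ n := by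
    intro x
    have hdeg : (q - p).natDegree ≤ n :=
      le_trans (Polynomial.natDegree_sub_le q p) (max_le hqdeg hpdeg)
    have h0 := poly_gap (q - p) hdeg a hmatch x
    rwa [Polynomial.eval_sub, Polynomial.coeff_sub, hpcoeff, hqcoeff] at h0
  -- pointwise split of the substituted integrand
  have hsplit : ∀ y : ℝ, η y * ψ (β * y + a)
      = η y * p.eval (β * y + a)
        + Set.indicator (Set.Ioi 0)
            (fun y => (A (lam + 1) - A lam) * β ^ n * (y ^ n * η y)) y := by
    intro y
    by_cases hy : η y = 0
    · simp [hy, Set.indicator_apply]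
    · have hy' : y ∈ Set.Ioo (-(2 : ℝ) ^ (-5 : ℤ)) ((2 : ℝ) ^ (-5 : ℤ)) := by
        by_contra h; exact hy (hηsupp y h)
      rw [h5] at hy'
      obtain ⟨hy1, hy2⟩ := hy'
      by_cases hypos : 0 < y
      · have hu : β * y + a ∈ Set.Icc a (a + 1 / 2) := by
          constructor
          · nlinarith
          · nlinarith
        rw [hq'R _ hu, Set.indicator_of_mem (Set.mem_Ioi.mpr hypos)]
        have h2 := hgap (β * y + a)
        rw [show β * y + a - a = β * y by ring] at h2
        have h3 : q.eval (β * y + a)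
            = p.eval (β * y + a) + (A (lam + 1) - A lam) * (β * y) ^ n := by linarith
        rw [h3, mul_pow]
        ring
      · push_neg at hypos
        have hby : y ≤ β * y := by nlinarith
        have hu : β * y + a ∈ Set.Icc ((lam : ℝ) / 2) a := by
          constructor
          · rw [hadef]; linarith
          · nlinarith
        rw [hcR _ hu, Set.indicator_of_notMem (by simpa using hypos)]
        ring
  -- integrability of moments
  have hint : ∀ j : ℕ, Integrable (fun y : ℝ => y ^ j * η y) := by
    intro j
    apply MeasureTheory.Integrable.mono' hη.abs
    · exact (continuous_pow j).aestronglyMeasurable.mul hη.aestronglyMeasurable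
    · filter_upwards with y
      by_cases hy : η y = 0
      · simp [hy]
      · have hy' : y ∈ Set.Ioo (-(2 : ℝ) ^ (-5 : ℤ)) ((2 : ℝ) ^ (-5 : ℤ)) := by
          by_contra h; exact hy (hηsupp y h)
        rw [h5] at hy'
        have hyabs : |y| ≤ 1 := by
          rw [abs_le]; constructor
          · linarith [hy'.1]
          · linarith [hy'.2]
        rw [Real.norm_eq_abs, abs_mul, abs_pow]
        have h1 : |y| ^ j ≤ 1 := pow_le_one₀ (abs_nonneg y) hyabs
        nlinarith [abs_nonneg (η y)]
  -- the polynomial part integrates to zero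
  set r : Polynomial ℝ := p.comp (Polynomial.C β * Polynomial.X + Polynomial.C a) with hrdef
  have hrdeg : r.natDegree ≤ n := by
    rw [hrdef]
    refine le_trans Polynomial.natDegree_comp_le ?_
    have h1 : (Polynomial.C β * Polynomial.X + Polynomial.C a).natDegree ≤ 1 := by
      refine le_trans (Polynomial.natDegree_add_le _ _) (max_le ?_ ?_)
      · exact le_trans (Polynomial.natDegree_C_mul_le _ _) Polynomial.natDegree_X_le
      · simp
    calc p.natDegree * (Polynomial.C β * Polynomial.X + Polynomial.C a).natDegree
        ≤ n * 1 := Nat.mul_le_mul hpdeg h1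
      _ = n := mul_one n
  have hreval : ∀ y : ℝ, p.eval (β * y + a) = r.eval y := by
    intro y; rw [hrdef, Polynomial.eval_comp]; simp
  have hG1eq : (fun y : ℝ => η y * p.eval (β * y + a))
      = fun y => ∑ j ∈ Finset.range (n + 1), r.coeff j * (y ^ j * η y) := by
    funext y
    rw [hreval, Polynomial.eval_eq_sum_range' (lt_of_le_of_lt hrdeg (Nat.lt_succ_self n)),
      Finset.mul_sum]
    apply Finset.sum_congr rfl
    intro j _
    ring
  have hG1int : Integrable (fun y : ℝ => η y * p.eval (β * y + a)) := by
    rw [hG1eq]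
    exact MeasureTheory.integrable_finset_sum _ (fun j _ => (hint j).const_mul _)
  have hG1zero : ∫ y : ℝ, η y * p.eval (β * y + a) = 0 := by
    rw [hG1eq, MeasureTheory.integral_finset_sum _ (fun j _ => (hint j).const_mul _)]
    apply Finset.sum_eq_zero
    intro j hj
    rw [MeasureTheory.integral_const_mul,
      hηmom j (by have := Finset.mem_range.mp hj; omega), mul_zero]
  -- the indicator part
  have hG2int : Integrable ((Set.Ioi (0 : ℝ)).indicator
      fun y => (A (lam + 1) - A lam) * β ^ n * (y ^ n * η y)) :=
    ((hint n).const_mul _).indicator measurableSet_Ioi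
  have hG2val : ∫ y : ℝ, (Set.Ioi (0 : ℝ)).indicator
        (fun y => (A (lam + 1) - A lam) * β ^ n * (y ^ n * η y)) y
      = (A (lam + 1) - A lam) * β ^ n * ∫ y in (0 : ℝ)..(1 / 2), y ^ n * η y := by
    rw [MeasureTheory.integral_indicator measurableSet_Ioi,
      MeasureTheory.integral_const_mul]
    congr 1
    rw [intervalIntegral.integral_of_le (by norm_num : (0 : ℝ) ≤ 1 / 2),
      ← MeasureTheory.integral_indicator measurableSet_Ioi,
      ← MeasureTheory.integral_indicator measurableSet_Ioc]
    congr 1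
    funext y
    by_cases h1 : y ∈ Set.Ioc (0 : ℝ) (1 / 2)
    · rw [Set.indicator_of_mem h1, Set.indicator_of_mem (Set.mem_Ioi.mpr h1.1)]
    · rw [Set.indicator_of_notMem h1]
      by_cases h2 : y ∈ Set.Ioi (0 : ℝ)
      · rw [Set.indicator_of_mem h2]
        rw [Set.mem_Ioc] at h1
        rw [Set.mem_Ioi] at h2
        push_neg at h1
        have hy12 : 1 / 2 < y := h1 h2
        have hzero : η y = 0 := by
          apply hηsupp
          rw [h5, Set.mem_Ioo]
          push_neg
          intro _
          linarith
        simp [hzero]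
      · rw [Set.indicator_of_notMem h2]
  -- change of variables, first substitution
  have harg : ∀ x : ℝ, (2 : ℝ) ^ (k + N) * (x - (2 : ℝ) ^ (-(k : ℤ)) * (K₀ : ℝ) * (μ' : ℝ) -
      (2 : ℝ) ^ (-(k : ℤ) - 1))
      = (2 : ℝ) ^ N * (((2 : ℝ) ^ k * x - (K₀ : ℝ) * (μ : ℝ)) - a) := by
    intro x
    have e1 : (2 : ℝ) ^ (-(k : ℤ)) = ((2 : ℝ) ^ k)⁻¹ := by rw [zpow_neg, zpow_natCast]
    have e2 : (2 : ℝ) ^ (-(k : ℤ) - 1) = ((2 : ℝ) ^ k * 2)⁻¹ := by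
      rw [show (-(k : ℤ) - 1) = -((k + 1 : ℕ) : ℤ) by push_cast; ring, zpow_neg,
        zpow_natCast, pow_succ]
    rw [e1, e2, pow_add, hadef, hlamdef]
    have h2k : ((2 : ℝ) ^ k) ≠ 0 := by positivity
    push_cast
    field_simp
    ring
  have key : (∫ x : ℝ,
        η ((2 : ℝ) ^ (k + N) * (x - (2 : ℝ) ^ (-(k : ℤ)) * (K₀ : ℝ) * (μ' : ℝ) -
            (2 : ℝ) ^ (-(k : ℤ) - 1))) *
          ψ ((2 : ℝ) ^ k * x - (K₀ : ℝ) * (μ : ℝ)))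
      = ((2 : ℝ) ^ k)⁻¹ * ∫ u : ℝ, η ((2 : ℝ) ^ N * (u - a)) * ψ u := by
    calc (∫ x : ℝ,
        η ((2 : ℝ) ^ (k + N) * (x - (2 : ℝ) ^ (-(k : ℤ)) * (K₀ : ℝ) * (μ' : ℝ) -
            (2 : ℝ) ^ (-(k : ℤ) - 1))) *
          ψ ((2 : ℝ) ^ k * x - (K₀ : ℝ) * (μ : ℝ)))
        = ∫ x : ℝ, (fun u : ℝ => η ((2 : ℝ) ^ N * ((u - (K₀ : ℝ) * (μ : ℝ)) - a)) *
            ψ (u - (K₀ : ℝ) * (μ : ℝ))) ((2 : ℝ) ^ k * x) := by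
          refine congrArg _ (funext fun x => ?_)
          simp only []
          rw [harg x]
      _ = |((2 : ℝ) ^ k)⁻¹| • ∫ u : ℝ, η ((2 : ℝ) ^ N * ((u - (K₀ : ℝ) * (μ : ℝ)) - a)) *
            ψ (u - (K₀ : ℝ) * (μ : ℝ)) :=
          MeasureTheory.Measure.integral_comp_mul_left
            (fun u : ℝ => η ((2 : ℝ) ^ N * ((u - (K₀ : ℝ) * (μ : ℝ)) - a)) *
              ψ (u - (K₀ : ℝ) * (μ : ℝ))) ((2 : ℝ) ^ k)
      _ = ((2 : ℝ) ^ k)⁻¹ * ∫ u : ℝ, η ((2 : ℝ) ^ N * (u - a)) * ψ u := by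
          rw [abs_of_pos (by positivity : (0 : ℝ) < ((2 : ℝ) ^ k)⁻¹), smul_eq_mul]
          congr 1
          exact MeasureTheory.integral_sub_right_eq_self
            (fun v => η ((2 : ℝ) ^ N * (v - a)) * ψ v) ((K₀ : ℝ) * (μ : ℝ))
  -- second substitution
  have hF : ∫ u : ℝ, η ((2 : ℝ) ^ N * (u - a)) * ψ u
      = β * ∫ y : ℝ, η y * ψ (β * y + a) := by
    calc ∫ u : ℝ, η ((2 : ℝ) ^ N * (u - a)) * ψ u
        = ∫ u : ℝ, (fun v : ℝ => (fun y => η y * ψ (β * y + a)) (v - (2 : ℝ) ^ N * a))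
            ((2 : ℝ) ^ N * u) := by
          refine congrArg _ (funext fun u => ?_)
          simp only []
          have ha1 : (2 : ℝ) ^ N * (u - a) = (2 : ℝ) ^ N * u - (2 : ℝ) ^ N * a := by ring
          have ha2 : β * ((2 : ℝ) ^ N * u - (2 : ℝ) ^ N * a) + a = u := by
            rw [hβdef]; field_simp; ring
          rw [ha1, ha2]
      _ = |((2 : ℝ) ^ N)⁻¹| • ∫ v : ℝ,
            (fun y => η y * ψ (β * y + a)) (v - (2 : ℝ) ^ N * a) :=
          MeasureTheory.Measure.integral_comp_mul_left
            (fun v : ℝ => (fun y => η y * ψ (β * y + a)) (v - (2 : ℝ) ^ N * a))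
            ((2 : ℝ) ^ N)
      _ = β * ∫ y : ℝ, η y * ψ (β * y + a) := by
          rw [← hβdef, abs_of_pos hβpos, smul_eq_mul]
          congr 1
          exact MeasureTheory.integral_sub_right_eq_self
            (fun y => η y * ψ (β * y + a)) ((2 : ℝ) ^ N * a)
  -- compute the remaining integral
  have hGint : ∫ y : ℝ, η y * ψ (β * y + a)
      = (A (lam + 1) - A lam) * β ^ n * ∫ y in (0 : ℝ)..(1 / 2), y ^ n * η y := by
    rw [show (fun y : ℝ => η y * ψ (β * y + a))
        = (fun y => η y * p.eval (β * y + a) + Set.indicator (Set.Ioi 0)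
            (fun y => (A (lam + 1) - A lam) * β ^ n * (y ^ n * η y)) y)
        from funext hsplit]
    rw [MeasureTheory.integral_add hG1int hG2int, hG1zero, hG2val, zero_add]
  -- final assembly
  rw [key, hF, hGint]
  have hconst : (2 : ℝ) ^ (-(((n : ℤ) + 1) * (N : ℤ))) = β * β ^ n := by
    have h1 : (-(((n : ℤ) + 1) * (N : ℤ))) = -((N * (n + 1) : ℕ) : ℤ) := by push_cast; ring
    rw [h1, zpow_neg, zpow_natCast, hβdef, ← pow_succ' (((2 : ℝ) ^ N)⁻¹) n, inv_pow,
      ← pow_mul]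
  rw [hconst]
  have h2k : ((2 : ℝ) ^ k) ≠ 0 := by positivity
  field_simp
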